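/- Let I_h denote piecewise linear interpolation on the uniform grid x_i = i·h. Suppose: (i) s : ℝ × [0,T] → ℝ satisfies ‖s‖_{1,∞} ≤ S₁ (bounded spatial Lipschitz constant) and its interpolation error obeys |(1 − I_h)sⁿ(x)| ≤ C·h² for all x; (ii) at grid point x_i and time level n, the backtracked numerical value is w̄_iⁿ = (I_h wⁿ)(x̃_i) where x̃_i = x_i − ( (f/s)-coefficient·z + (D/s)-coefficient·∂w/∂x )·Δt/φ with |x̃_i − x_i| ≤ (Δt/φ_*)·( Φ₁·‖zⁿ⁻¹‖_∞ + Φ₂·(|∂s_iⁿ/∂x| + |∂ζ_iⁿ/∂x|) ) for constants Φ₁, Φ₂ bounding ‖f/s‖_∞ and ‖D/s‖_∞ and φ ≥ φ_* > 0; (iii) the numerical velocity satisfies ‖zⁿ⁻¹‖_∞ ≤ M₀(1 + β·h); and (iv) ζ̄_iⁿ = (I_h sⁿ)(x̃_i) − w̄_iⁿ denotes the interpolated saturation error. Then |w̄_iⁿ − s_iⁿ| ≤ M·( Δt + h·Δt + h² + |ζ̄_iⁿ| + Δt·|∂ζ_iⁿ/∂x| ), where M depends only on S₁, C, Φ₁,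 Φ₂, M₀, β, φ_*. -/

import Mathlib

/-- **Estimate (F-1-2-a) of the paper (equation (3.47)): deviation of the backtracked
numerical saturation from the exact saturation.**  Suppose the exact saturation `sⁿ`
is spatially Lipschitz with constant `S₁` and its piecewise linear interpolant `I_h sⁿ`
obeys `|(1 − I_h)sⁿ(x)| ≤ C·h²`; the backtracked value is `w̄_iⁿ = (I_h wⁿ)(x̃_i)`
where the foot point satisfies
`|x̃_i − x_i| ≤ (Δt/φ_*)(Φ₁‖zⁿ⁻¹‖_∞ + Φ₂(|∂s_iⁿ/∂x| + |∂ζ_iⁿ/∂x|))`;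
the numerical velocity satisfies `‖zⁿ⁻¹‖_∞ ≤ M₀(1 + βh)`; and
`ζ̄_iⁿ = (I_h sⁿ)(x̃_i) − w̄_iⁿ` is the interpolated saturation error.  Then
`|w̄_iⁿ − s_iⁿ| ≤ M(Δt + hΔt + h² + |ζ̄_iⁿ| + Δt·|∂ζ_iⁿ/∂x|)` with `M` depending only
on `S₁, C, Φ₁, Φ₂, M₀, β, φ_*`. -/
theorem backtracked_saturation_estimate
    (S₁ C Φ₁ Φ₂ M₀ β φs : ℝ)
    (hS₁ : 0 ≤ S₁) (hC : 0 ≤ C) (hΦ₁ : 0 ≤ Φ₁) (hΦ₂ : 0 ≤ Φ₂)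
    (hM₀ : 0 ≤ M₀) (hβ : 0 ≤ β) (hφs : 0 < φs) :
    ∃ M : ℝ, 0 < M ∧
      ∀ (h Δt : ℝ), 0 < h → 0 < Δt →
      -- `sn` is the exact saturation at time level `n`, `Ihs = I_h sⁿ` its interpolant
      ∀ (sn Ihs : ℝ → ℝ),
        (∀ y z : ℝ, |sn y - sn z| ≤ S₁ * |y - z|) →
        (∀ y : ℝ, |sn y - Ihs y| ≤ C * h ^ 2) →
      -- grid point `x_i`, foot point `x̃_i`, backtracked value `w̄`, velocity bound `Z`,
      -- `sx = |∂s_iⁿ/∂x|`, `ζx = |∂ζ_iⁿ/∂x|`, interpolated error `ζ̄`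
      ∀ (xi xtil wbar Z sx ζx ζbar : ℝ),
        0 ≤ sx → sx ≤ S₁ → 0 ≤ ζx → 0 ≤ Z →
        |xtil - xi| ≤ Δt / φs * (Φ₁ * Z + Φ₂ * (sx + ζx)) →
        Z ≤ M₀ * (1 + β * h) →
        ζbar = Ihs xtil - wbar →
        |wbar - sn xi| ≤ M * (Δt + h * Δt + h ^ 2 + |ζbar| + Δt * ζx) := by
  refine ⟨1 + C + S₁ / φs * (Φ₁ * M₀ + Φ₁ * M₀ * β + Φ₂ * S₁ + Φ₂), by positivity, ?_⟩
  intro h Δt hh hΔt sn Ihs hLip hInterp xi xtil wbar Z sx ζx ζbar hsx hsxS hζx hZ hfoot hZM hζbar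
  have key : |wbar - sn xi| ≤ |ζbar| + C * h ^ 2 + S₁ * |xtil - xi| := by
    have h1 : wbar - sn xi = -(ζbar) + (Ihs xtil - sn xtil) + (sn xtil - sn xi) := by
      rw [hζbar]; ring
    calc |wbar - sn xi| ≤ |-(ζbar) + (Ihs xtil - sn xtil)| + |sn xtil - sn xi| := by
            rw [h1]; exact abs_add_le _ _
      _ ≤ |-(ζbar)| + |Ihs xtil - sn xtil| + |sn xtil - sn xi| :=
            add_le_add (abs_add_le _ _) le_rfl
      _ ≤ |ζbar| + C * h ^ 2 + S₁ * |xtil - xi| := by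
            rw [abs_neg, abs_sub_comm (Ihs xtil)]
            exact add_le_add (add_le_add le_rfl (hInterp xtil)) (hLip xtil xi)
  have hfoot2 : S₁ * |xtil - xi| ≤ S₁ * (Δt / φs * (Φ₁ * (M₀ * (1 + β * h)) + Φ₂ * (S₁ + ζx))) := by
    refine mul_le_mul_of_nonneg_left (le_trans hfoot ?_) hS₁
    refine mul_le_mul_of_nonneg_left ?_ (by positivity)
    exact add_le_add (mul_le_mul_of_nonneg_left hZM hΦ₁)
      (mul_le_mul_of_nonneg_left (add_le_add hsxS le_rfl) hΦ₂)
  have hφ : (0:ℝ) < φs := hφs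
  have e : S₁ * (Δt / φs * (Φ₁ * (M₀ * (1 + β * h)) + Φ₂ * (S₁ + ζx)))
      = S₁ / φs * (Φ₁ * M₀ * Δt + Φ₁ * M₀ * β * (h * Δt) + Φ₂ * S₁ * Δt + Φ₂ * (Δt * ζx)) := by
    rw [div_eq_mul_inv, div_eq_mul_inv]; ring
  rw [e] at hfoot2
  set A := S₁ / φs with hA
  have hA0 : 0 ≤ A := div_nonneg hS₁ hφs.le
  set M := 1 + C + A * (Φ₁ * M₀ + Φ₁ * M₀ * β + Φ₂ * S₁ + Φ₂) with hM
  have hMexp : M = 1 + C + A * (Φ₁ * M₀) + A * (Φ₁ * M₀ * β) + A * (Φ₂ * S₁) + A * Φ₂ := by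
    rw [hM]; ring
  have p1 : 0 ≤ A * (Φ₁ * M₀) := mul_nonneg hA0 (mul_nonneg hΦ₁ hM₀)
  have p2 : 0 ≤ A * (Φ₁ * M₀ * β) := mul_nonneg hA0 (mul_nonneg (mul_nonneg hΦ₁ hM₀) hβ)
  have p3 : 0 ≤ A * (Φ₂ * S₁) := mul_nonneg hA0 (mul_nonneg hΦ₂ hS₁)
  have p4 : 0 ≤ A * Φ₂ := mul_nonneg hA0 hΦ₂
  have c1 : A * (Φ₁ * M₀) + A * (Φ₂ * S₁) ≤ M := by rw [hMexp]; linarith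
  have c2 : A * (Φ₁ * M₀ * β) ≤ M := by rw [hMexp]; linarith
  have c3 : C ≤ M := by rw [hMexp]; linarith
  have c4 : (1:ℝ) ≤ M := by rw [hMexp]; linarith
  have c5 : A * Φ₂ ≤ M := by rw [hMexp]; linarith
  have habs : (0:ℝ) ≤ |ζbar| := abs_nonneg _
  have hhΔt : (0:ℝ) ≤ h * Δt := (mul_pos hh hΔt).le
  have hΔζ : (0:ℝ) ≤ Δt * ζx := mul_nonneg hΔt.le hζx
  have e2 : A * (Φ₁ * M₀ * Δt + Φ₁ * M₀ * β * (h * Δt) + Φ₂ * S₁ * Δt + Φ₂ * (Δt * ζx))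
      = (A * (Φ₁ * M₀) + A * (Φ₂ * S₁)) * Δt + (A * (Φ₁ * M₀ * β)) * (h * Δt)
        + (A * Φ₂) * (Δt * ζx) := by ring
  rw [e2] at hfoot2
  have expand : M * (Δt + h * Δt + h ^ 2 + |ζbar| + Δt * ζx)
      = M * Δt + M * (h * Δt) + M * h ^ 2 + M * |ζbar| + M * (Δt * ζx) := by ring
  rw [expand]
  have b1 := mul_le_mul_of_nonneg_right c1 hΔt.le
  have b2 := mul_le_mul_of_nonneg_right c2 hhΔt
  have b3 := mul_le_mul_of_nonneg_right c3 (sq_nonneg h)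
  have b4 := mul_le_mul_of_nonneg_right c4 habs
  have b5 := mul_le_mul_of_nonneg_right c5 hΔζ
  rw [one_mul] at b4
  linarith
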